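/- Let T be a tree on n vertices with matching number m and let r be the rank of its adjacency matrix over the reals. Then r = 2m. -/

import Mathlib

set_option linter.unusedSectionVars false
set_option linter.unusedVariables false
set_option linter.unnecessarySimpa false
set_option maxHeartbeats 1000000

/-- The matching number of a simple graph: the maximum number of pairwise
non-adjacent edges. -/
noncomputable def matchingNumber {V : Type*} [Fintype V] (G : SimpleGraph V) : ℕ :=
  sSup {k | ∃ M : G.Subgraph, M.IsMatching ∧ M.edgeSet.ncard = k}

namespace TreeRankAux

open SimpleGraph Finset Matrix

variable {V : Type*} [Fintype V] [DecidableEq V]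

lemma mset_nonempty (G : SimpleGraph V) :
    ({k | ∃ M : G.Subgraph, M.IsMatching ∧ M.edgeSet.ncard = k} : Set ℕ).Nonempty := by
  refine ⟨0, ⊥, ?_, ?_⟩
  · intro v hv
    simp [Subgraph.verts_bot] at hv
  · simp [Subgraph.edgeSet_bot]

lemma mset_bdd (G : SimpleGraph V) :
    BddAbove ({k | ∃ M : G.Subgraph, M.IsMatching ∧ M.edgeSet.ncard = k} : Set ℕ) := by
  refine ⟨G.edgeSet.ncard, ?_⟩
  rintro k ⟨M, _, rfl⟩
  exact Set.ncard_le_ncard M.edgeSet_subset (Set.toFinite _)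

lemma exists_max_matching (G : SimpleGraph V) :
    ∃ M : G.Subgraph, M.IsMatching ∧ M.edgeSet.ncard = matchingNumber G :=
  Nat.sSup_mem (mset_nonempty G) (mset_bdd G)

lemma le_matchingNumber {G : SimpleGraph V} {M : G.Subgraph} (hM : M.IsMatching) :
    M.edgeSet.ncard ≤ matchingNumber G :=
  le_csSup (mset_bdd G) ⟨M, hM, rfl⟩

def cut (G : SimpleGraph V) (u v : V) : SimpleGraph V where
  Adj a b := G.Adj a b ∧ a ≠ u ∧ a ≠ v ∧ b ≠ u ∧ b ≠ v
  symm := ⟨by rintro a b ⟨h, h1, h2, h3, h4⟩; exact ⟨h.symm, h3, h4, h1, h2⟩⟩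
  loopless := ⟨by rintro a ⟨h, -⟩; exact h.ne rfl⟩

instance (G : SimpleGraph V) [DecidableRel G.Adj] (u v : V) :
    DecidableRel (cut G u v).Adj := fun a b =>
  inferInstanceAs (Decidable (G.Adj a b ∧ a ≠ u ∧ a ≠ v ∧ b ≠ u ∧ b ≠ v))

section Rank

variable {G : SimpleGraph V} [DecidableRel G.Adj] {u v : V}

lemma sum_split (hne : u ≠ v) (f : V → ℝ) :
    ∑ t, f t = f u + f v + ∑ t ∈ Finset.univ \ {u, v}, f t := by
  rw [← Finset.sum_sdiff (Finset.subset_univ ({u, v} : Finset V)),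
    Finset.sum_pair hne]
  ring

lemma mem_sdiff_pair {t : V} : t ∈ Finset.univ \ ({u, v} : Finset V) ↔ t ≠ u ∧ t ≠ v := by
  simp [Finset.mem_sdiff]

lemma mem_ker_iff (M : Matrix V V ℝ) (x : V → ℝ) :
    x ∈ LinearMap.ker M.mulVecLin ↔ ∀ r, ∑ t, M r t * x t = 0 := by
  rw [LinearMap.mem_ker, funext_iff]
  simp [Matrix.mulVecLin_apply, Matrix.mulVec, dotProduct]

lemma rowu (hadj : G.Adj u v) (hleaf : ∀ w, G.Adj u w → w = v) (t : V) :
    (G.adjMatrix ℝ) u t = if t = v then 1 else 0 := by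
  rw [adjMatrix_apply]
  by_cases h : G.Adj u t
  · simp [← hleaf t h, h]
  · have : ¬ t = v := fun h' => h (h' ▸ hadj)
    simp [h, this]

lemma colu (hleaf : ∀ w, G.Adj u w → w = v) {w : V} (hw : w ≠ v) :
    (G.adjMatrix ℝ) w u = 0 := by
  rw [adjMatrix_apply, if_neg]
  intro h
  exact hw (hleaf w h.symm)

lemma cutMatrix (a b : V) :
    ((cut G u v).adjMatrix ℝ) a b =
      if a = u ∨ a = v ∨ b = u ∨ b = v then 0 else (G.adjMatrix ℝ) a b := by
  by_cases h : a = u ∨ a = v ∨ b = u ∨ b = v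
  · rw [if_pos h, adjMatrix_apply, if_neg]
    rintro ⟨-, h1, h2, h3, h4⟩
    tauto
  · push_neg at h
    rw [if_neg (by tauto), adjMatrix_apply, adjMatrix_apply]
    by_cases hA : G.Adj a b
    · rw [if_pos, if_pos hA]
      exact ⟨hA, h.1, h.2.1, h.2.2.1, h.2.2.2⟩
    · rw [if_neg, if_neg hA]
      intro h'
      exact hA h'.1

def gfun (G : SimpleGraph V) [DecidableRel G.Adj] (u v : V) : V → ℝ :=
  fun t => if t = u ∨ t = v then 0 else (G.adjMatrix ℝ) v t

/-- the functional `y ↦ -(∑_{t ∉ {u,v}} A v t * y t)`. -/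
noncomputable def ell (G : SimpleGraph V) [DecidableRel G.Adj] (u v : V) :
    (V → ℝ) →ₗ[ℝ] ℝ where
  toFun y := -(gfun G u v ⬝ᵥ y)
  map_add' y z := by simp [dotProduct_add]; ring
  map_smul' m y := by simp [dotProduct_smul]

lemma ell_apply (y : V → ℝ) :
    ell G u v y = -(∑ t, if t = u ∨ t = v then 0 else (G.adjMatrix ℝ) v t * y t) := by
  simp only [ell, gfun, LinearMap.coe_mk, AddHom.coe_mk, dotProduct]
  congr 1
  apply Finset.sum_congr rfl
  intro t _
  split <;> simp

/-- extension map `ker B → ker A`. -/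
noncomputable def Fmap (G : SimpleGraph V) [DecidableRel G.Adj] (u v : V) :
    (V → ℝ) →ₗ[ℝ] (V → ℝ) where
  toFun y := fun w => if w = u then ell G u v y else if w = v then 0 else y w
  map_add' y z := by
    funext w
    by_cases h1 : w = u
    · simp [h1]
    · by_cases h2 : w = v
      · subst h2; simp [h1]
      · simp [h1, h2]
  map_smul' m y := by
    funext w
    by_cases h1 : w = u
    · simp [h1]
    · by_cases h2 : w = v
      · subst h2; simp [h1]
      · simp [h1, h2]

/-- patching map. -/
def Gmap (u v : V) : ((V → ℝ) × ℝ × ℝ) →ₗ[ℝ] (V → ℝ) where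
  toFun p := fun w => if w = u then p.2.1 else if w = v then p.2.2 else p.1 w
  map_add' p q := by
    funext w
    by_cases h1 : w = u
    · simp [h1]
    · by_cases h2 : w = v
      · subst h2; simp [h1]
      · simp [h1, h2]
  map_smul' m p := by
    funext w
    by_cases h1 : w = u
    · simp [h1]
    · by_cases h2 : w = v
      · subst h2; simp [h1]
      · simp [h1, h2]

lemma Fmap_apply (y : V → ℝ) (w : V) :
    Fmap G u v y w = if w = u then ell G u v y else if w = v then 0 else y w := rfl

lemma Gmap_apply (p : (V → ℝ) × ℝ × ℝ) (w : V) :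
    Gmap u v p w = if w = u then p.2.1 else if w = v then p.2.2 else p.1 w := rfl

lemma ell_congr {y z : V → ℝ} (h : ∀ t, t ≠ u → t ≠ v → y t = z t) :
    ell G u v y = ell G u v z := by
  rw [ell_apply, ell_apply]
  congr 1
  apply Finset.sum_congr rfl
  intro t _
  split
  · rfl
  · next hcond =>
    push_neg at hcond
    rw [h t hcond.1 hcond.2]

lemma ell_sdiff (hne : u ≠ v) (y : V → ℝ) :
    ell G u v y = -(∑ t ∈ Finset.univ \ {u, v}, (G.adjMatrix ℝ) v t * y t) := by
  rw [ell_apply, sum_split hne (f := fun t => if t = u ∨ t = v then 0 else (G.adjMatrix ℝ) v t * y t)]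
  rw [if_pos (Or.inl rfl), if_pos (Or.inr rfl)]
  rw [zero_add, zero_add]
  congr 1
  apply Finset.sum_congr rfl
  intro t ht
  rw [mem_sdiff_pair] at ht
  rw [if_neg (by tauto)]

lemma ker_at_v (hadj : G.Adj u v) (hleaf : ∀ w, G.Adj u w → w = v) {x : V → ℝ}
    (hx : x ∈ LinearMap.ker (G.adjMatrix ℝ).mulVecLin) : x v = 0 := by
  have h := (mem_ker_iff _ x).mp hx u
  have h2 : ∀ t : V, (G.adjMatrix ℝ) u t * x t = if t = v then x t else 0 := by
    intro t
    rw [rowu hadj hleaf]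
    split <;> simp
  rw [Finset.sum_congr rfl (fun t _ => h2 t), Finset.sum_ite_eq'] at h
  simpa using h

lemma ker_at_u (hadj : G.Adj u v) (hleaf : ∀ w, G.Adj u w → w = v) {x : V → ℝ}
    (hx : x ∈ LinearMap.ker (G.adjMatrix ℝ).mulVecLin) : ell G u v x = x u := by
  have hne : u ≠ v := hadj.ne
  have h := (mem_ker_iff _ x).mp hx v
  rw [sum_split hne (f := fun t => (G.adjMatrix ℝ) v t * x t)] at h
  have h1 : (G.adjMatrix ℝ) v u = 1 := by rw [adjMatrix_apply, if_pos hadj.symm]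
  have h2 : (G.adjMatrix ℝ) v v = 0 := by simp
  rw [h1, h2, one_mul, zero_mul] at h
  rw [ell_sdiff hne]
  linarith

lemma Fmem (hadj : G.Adj u v) (hleaf : ∀ w, G.Adj u w → w = v) {y : V → ℝ}
    (hy : y ∈ LinearMap.ker ((cut G u v).adjMatrix ℝ).mulVecLin) :
    Fmap G u v y ∈ LinearMap.ker (G.adjMatrix ℝ).mulVecLin := by
  have hne : u ≠ v := hadj.ne
  rw [mem_ker_iff]
  intro r
  by_cases hr1 : r = u
  · rw [hr1]
    have h2 : ∀ t : V, (G.adjMatrix ℝ) u t * Fmap G u v y t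
        = if t = v then Fmap G u v y t else 0 := by
      intro t
      rw [rowu hadj hleaf]
      split <;> simp
    rw [Finset.sum_congr rfl (fun t _ => h2 t), Finset.sum_ite_eq']
    simp [Fmap_apply, hne.symm]
  · by_cases hr2 : r = v
    · rw [hr2]
      rw [sum_split hne (f := fun t => (G.adjMatrix ℝ) v t * Fmap G u v y t)]
      have h1 : (G.adjMatrix ℝ) v u = 1 := by rw [adjMatrix_apply, if_pos hadj.symm]
      have h2 : (G.adjMatrix ℝ) v v = 0 := by simp
      have h3 : Fmap G u v y u = ell G u v y := by rw [Fmap_apply, if_pos rfl]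
      have h4 : Fmap G u v y v = 0 := by rw [Fmap_apply, if_neg hne.symm, if_pos rfl]
      have h5 : ∑ t ∈ Finset.univ \ {u, v}, (G.adjMatrix ℝ) v t * Fmap G u v y t
          = ∑ t ∈ Finset.univ \ {u, v}, (G.adjMatrix ℝ) v t * y t := by
        apply Finset.sum_congr rfl
        intro t ht
        rw [mem_sdiff_pair] at ht
        rw [Fmap_apply, if_neg ht.1, if_neg ht.2]
      rw [h1, h2, h3, h4, h5, one_mul, zero_mul, ell_sdiff hne]
      ring
    · rw [sum_split hne (f := fun t => (G.adjMatrix ℝ) r t * Fmap G u v y t)]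
      have h1 : (G.adjMatrix ℝ) r u = 0 := colu hleaf hr2
      have h4 : Fmap G u v y v = 0 := by rw [Fmap_apply, if_neg hne.symm, if_pos rfl]
      have h5 : ∑ t ∈ Finset.univ \ {u, v}, (G.adjMatrix ℝ) r t * Fmap G u v y t
          = ∑ t ∈ Finset.univ \ {u, v}, ((cut G u v).adjMatrix ℝ) r t * y t := by
        apply Finset.sum_congr rfl
        intro t ht
        rw [mem_sdiff_pair] at ht
        rw [Fmap_apply, if_neg ht.1, if_neg ht.2, cutMatrix, if_neg (by tauto)]
      have hy' := (mem_ker_iff _ y).mp hy r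
      rw [sum_split hne (f := fun t => ((cut G u v).adjMatrix ℝ) r t * y t)] at hy'
      have hB1 : ((cut G u v).adjMatrix ℝ) r u = 0 := by rw [cutMatrix, if_pos (by tauto)]
      have hB2 : ((cut G u v).adjMatrix ℝ) r v = 0 := by rw [cutMatrix, if_pos (by tauto)]
      rw [hB1, hB2, zero_mul, zero_mul, zero_add, zero_add] at hy'
      rw [h1, h4, h5, zero_mul, mul_zero, hy']
      ring

lemma Gmem (hadj : G.Adj u v) (hleaf : ∀ w, G.Adj u w → w = v) {x : V → ℝ} {a b : ℝ}
    (hx : x ∈ LinearMap.ker (G.adjMatrix ℝ).mulVecLin) :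
    Gmap u v (x, a, b) ∈ LinearMap.ker ((cut G u v).adjMatrix ℝ).mulVecLin := by
  have hne : u ≠ v := hadj.ne
  rw [mem_ker_iff]
  intro r
  by_cases hr1 : r = u
  · rw [hr1]
    apply Finset.sum_eq_zero
    intro t _
    rw [cutMatrix, if_pos (by tauto), zero_mul]
  by_cases hr2 : r = v
  · rw [hr2]
    apply Finset.sum_eq_zero
    intro t _
    rw [cutMatrix, if_pos (by tauto), zero_mul]
  rw [sum_split hne (f := fun t => ((cut G u v).adjMatrix ℝ) r t * Gmap u v (x, a, b) t)]
  have hB1 : ((cut G u v).adjMatrix ℝ) r u = 0 := by rw [cutMatrix, if_pos (by tauto)]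
  have hB2 : ((cut G u v).adjMatrix ℝ) r v = 0 := by rw [cutMatrix, if_pos (by tauto)]
  have h5 : ∑ t ∈ Finset.univ \ {u, v}, ((cut G u v).adjMatrix ℝ) r t * Gmap u v (x, a, b) t
      = ∑ t ∈ Finset.univ \ {u, v}, (G.adjMatrix ℝ) r t * x t := by
    apply Finset.sum_congr rfl
    intro t ht
    rw [mem_sdiff_pair] at ht
    rw [Gmap_apply, if_neg ht.1, if_neg ht.2, cutMatrix, if_neg (by tauto)]
  have hx' := (mem_ker_iff _ x).mp hx r
  rw [sum_split hne (f := fun t => (G.adjMatrix ℝ) r t * x t)] at hx'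
  have h1 : (G.adjMatrix ℝ) r u = 0 := colu hleaf hr2
  have h2 : x v = 0 := ker_at_v hadj hleaf hx
  rw [h1, h2, zero_mul, mul_zero, zero_add, zero_add] at hx'
  rw [hB1, hB2, h5, zero_mul, zero_mul, hx']
  ring

/-- the kernel of the cut adjacency matrix is the kernel of the original plus 2 dims. -/
noncomputable def kerEquiv (hadj : G.Adj u v) (hleaf : ∀ w, G.Adj u w → w = v) :
    LinearMap.ker (((cut G u v).adjMatrix ℝ).mulVecLin) ≃ₗ[ℝ]
      (LinearMap.ker ((G.adjMatrix ℝ).mulVecLin)) × ℝ × ℝ where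
  toFun y := (⟨Fmap G u v y.1, Fmem hadj hleaf y.2⟩, y.1 u, y.1 v)
  invFun p := ⟨Gmap u v (p.1.1, p.2.1, p.2.2), Gmem hadj hleaf p.1.2⟩
  map_add' y z := by
    refine Prod.ext (Subtype.ext ?_) (Prod.ext rfl rfl)
    simpa using map_add (Fmap G u v) y.1 z.1
  map_smul' m y := by
    refine Prod.ext (Subtype.ext ?_) (Prod.ext rfl rfl)
    simpa using map_smul (Fmap G u v) m y.1
  left_inv y := by
    have hne : u ≠ v := hadj.ne
    apply Subtype.ext
    funext w
    simp only [Gmap_apply, Fmap_apply]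
    by_cases h1 : w = u
    · simp [h1]
    · by_cases h2 : w = v
      · simp [h2, Ne.symm hne]
      · simp [h1, h2]
  right_inv p := by
    have hne : u ≠ v := hadj.ne
    obtain ⟨⟨x, hx⟩, a, b⟩ := p
    refine Prod.ext (Subtype.ext ?_) (Prod.ext ?_ ?_)
    · funext w
      have he : ell G u v (Gmap u v (x, a, b)) = ell G u v x := by
        apply ell_congr
        intro t ht1 ht2
        rw [Gmap_apply, if_neg ht1, if_neg ht2]
      by_cases h1 : w = u
      · simp [Fmap_apply, h1, he, ker_at_u hadj hleaf hx]
      · by_cases h2 : w = v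
        · simp [Fmap_apply, h2, Ne.symm hne, ker_at_v hadj hleaf hx]
        · simp [Fmap_apply, Gmap_apply, h1, h2]
    · show Gmap u v (x, a, b) u = a
      rw [Gmap_apply, if_pos rfl]
    · show Gmap u v (x, a, b) v = b
      rw [Gmap_apply, if_neg hne.symm, if_pos rfl]

lemma rank_cut (hadj : G.Adj u v) (hleaf : ∀ w, G.Adj u w → w = v) :
    (G.adjMatrix ℝ).rank = ((cut G u v).adjMatrix ℝ).rank + 2 := by
  have e := kerEquiv hadj hleaf
  have hdim : Module.finrank ℝ (LinearMap.ker (((cut G u v).adjMatrix ℝ).mulVecLin))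
      = Module.finrank ℝ (LinearMap.ker ((G.adjMatrix ℝ).mulVecLin)) + 2 := by
    rw [e.finrank_eq, Module.finrank_prod, Module.finrank_prod, Module.finrank_self]
  have hA := LinearMap.finrank_range_add_finrank_ker (G.adjMatrix ℝ).mulVecLin
  have hB := LinearMap.finrank_range_add_finrank_ker ((cut G u v).adjMatrix ℝ).mulVecLin
  rw [Module.finrank_fintype_fun_eq_card] at hA hB
  have hrA : (G.adjMatrix ℝ).rank
      = Module.finrank ℝ (LinearMap.range ((G.adjMatrix ℝ).mulVecLin)) := rfl
  have hrB : ((cut G u v).adjMatrix ℝ).rank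
      = Module.finrank ℝ (LinearMap.range (((cut G u v).adjMatrix ℝ).mulVecLin)) := rfl
  omega


end Rank

lemma cut_le (G : SimpleGraph V) (u v : V) : cut G u v ≤ G := fun a b h => h.1

lemma cut_adj {G : SimpleGraph V} {u v a b : V} :
    (cut G u v).Adj a b ↔ G.Adj a b ∧ a ≠ u ∧ a ≠ v ∧ b ≠ u ∧ b ≠ v := Iff.rfl

lemma cut_isAcyclic {G : SimpleGraph V} (hG : G.IsAcyclic) (u v : V) :
    (cut G u v).IsAcyclic := by
  intro a c hc
  exact hG (c.mapLe (cut_le G u v)) (hc.mapLe _)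

lemma cut_edgeSet_ssubset {G : SimpleGraph V} {u v : V} (h : G.Adj u v) :
    (cut G u v).edgeSet ⊂ G.edgeSet := by
  constructor
  · exact SimpleGraph.edgeSet_mono (cut_le G u v)
  · intro hsub
    have : s(u, v) ∈ (cut G u v).edgeSet := hsub (by simpa using h)
    rw [mem_edgeSet, cut_adj] at this
    exact this.2.1 rfl

variable {G : SimpleGraph V} {u v : V}

/-- lift a subgraph of `cut G u v` to a subgraph of `G`. -/
def liftSub (N : (cut G u v).Subgraph) : G.Subgraph where
  verts := N.verts
  Adj := N.Adj
  adj_sub h := (N.adj_sub h).1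
  edge_vert h := N.edge_vert h
  symm := N.symm

lemma liftSub_isMatching {N : (cut G u v).Subgraph} (hN : N.IsMatching) :
    (liftSub N).IsMatching := hN

lemma liftSub_edgeSet (N : (cut G u v).Subgraph) : (liftSub N).edgeSet = N.edgeSet := rfl

lemma liftSub_support (N : (cut G u v).Subgraph) {a : V} (ha : a ∈ (liftSub N).support) :
    a ≠ u ∧ a ≠ v := by
  obtain ⟨b, hb⟩ := ha
  have := N.adj_sub hb
  exact ⟨this.2.1, this.2.2.1⟩

/-- restrict a subgraph of `G` to a subgraph of `cut G u v`. -/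
def cutSub (M : G.Subgraph) (u v : V) : (cut G u v).Subgraph where
  verts := {a | ∃ b, M.Adj a b ∧ a ≠ u ∧ a ≠ v ∧ b ≠ u ∧ b ≠ v}
  Adj a b := M.Adj a b ∧ a ≠ u ∧ a ≠ v ∧ b ≠ u ∧ b ≠ v
  adj_sub h := ⟨M.adj_sub h.1, h.2⟩
  edge_vert h := ⟨_, h⟩
  symm := ⟨by rintro a b ⟨h, h1, h2, h3, h4⟩; exact ⟨M.adj_symm h, h3, h4, h1, h2⟩⟩

lemma cutSub_isMatching {M : G.Subgraph} (hM : M.IsMatching) :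
    (cutSub M u v).IsMatching := by
  rintro a ⟨b, hab, h1, h2, h3, h4⟩
  obtain ⟨w, hw, huniq⟩ := hM (M.edge_vert hab)
  refine ⟨b, ⟨hab, h1, h2, h3, h4⟩, ?_⟩
  rintro y ⟨hay, -⟩
  rw [huniq y hay, huniq b hab]

lemma cutSub_edgeSet (M : G.Subgraph) (u v : V) :
    (cutSub M u v).edgeSet = M.edgeSet \ {e | u ∈ e ∨ v ∈ e} := by
  ext e
  induction e with
  | _ a b =>
    simp only [Subgraph.mem_edgeSet, Set.mem_diff, Set.mem_setOf_eq, Sym2.mem_iff]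
    constructor
    · rintro ⟨h, h1, h2, h3, h4⟩
      exact ⟨h, by tauto⟩
    · rintro ⟨h, hne⟩
      push_neg at hne
      exact ⟨h, fun h' => hne.1.1 h'.symm, fun h' => hne.2.1 h'.symm,
        fun h' => hne.1.2 h'.symm, fun h' => hne.2.2 h'.symm⟩

lemma matchingNumber_cut (hadj : G.Adj u v) (hleaf : ∀ w, G.Adj u w → w = v) :
    matchingNumber G = matchingNumber (cut G u v) + 1 := by
  have hne : u ≠ v := hadj.ne
  -- ≥ direction
  obtain ⟨N, hN, hNcard⟩ := exists_max_matching (cut G u v)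
  have hdisj : Disjoint (liftSub N).support (G.subgraphOfAdj hadj).support := by
    rw [support_subgraphOfAdj, Set.disjoint_right]
    rintro a (rfl | rfl) ha
    · exact (liftSub_support N ha).1 rfl
    · exact (liftSub_support N ha).2 rfl
  have hLM : ((liftSub N) ⊔ G.subgraphOfAdj hadj).IsMatching :=
    (liftSub_isMatching hN).sup (Subgraph.IsMatching.subgraphOfAdj hadj) hdisj
  have hnotmem : s(u, v) ∉ (liftSub N).edgeSet := by
    rw [liftSub_edgeSet, Subgraph.mem_edgeSet]
    intro h
    exact (N.adj_sub h).2.1 rfl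
  have hcardL : ((liftSub N) ⊔ G.subgraphOfAdj hadj).edgeSet.ncard
      = matchingNumber (cut G u v) + 1 := by
    rw [Subgraph.edgeSet_sup, edgeSet_subgraphOfAdj, Set.union_singleton,
      Set.ncard_insert_of_notMem hnotmem (Set.toFinite _), liftSub_edgeSet, hNcard]
  have hge : matchingNumber (cut G u v) + 1 ≤ matchingNumber G := by
    rw [← hcardL]; exact le_matchingNumber hLM
  -- ≤ direction
  obtain ⟨M, hM, hMcard⟩ := exists_max_matching G
  by_cases hv : ∃ w, M.Adj v w
  · obtain ⟨w, hvw⟩ := hv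
    obtain ⟨w', hw', huniq⟩ := hM (M.edge_vert hvw)
    have hww : w = w' := huniq w hvw
    subst hww
    have hkey : (cutSub M u v).edgeSet = M.edgeSet \ {s(v, w)} := by
      rw [cutSub_edgeSet]
      ext e
      induction e with
      | _ a b =>
        simp only [Set.mem_diff, Set.mem_setOf_eq, Sym2.mem_iff, Set.mem_singleton_iff,
          and_congr_right_iff]
        intro h
        rw [Subgraph.mem_edgeSet] at h
        constructor
        · rintro hnot he
          rw [Sym2.eq_iff] at he
          rcases he with ⟨rfl, rfl⟩ | ⟨rfl, rfl⟩
          · exact hnot (Or.inr (Or.inl rfl))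
          · exact hnot (Or.inr (Or.inr rfl))
        · rintro hne' ((rfl | rfl) | (rfl | rfl))
          · -- u = a : M.Adj u b, so b = v, so u = w
            have hb : b = v := hleaf b (M.adj_sub h)
            subst hb
            have : u = w := huniq u (M.adj_symm h)
            exact hne' (by rw [this, Sym2.eq_swap])
          · -- u = b
            have ha : a = v := hleaf a (M.adj_sub (M.adj_symm h))
            subst ha
            have : u = w := huniq u h
            exact hne' (by rw [this])
          · -- v = a
            have : b = w := huniq b h
            exact hne' (by rw [this])
          · -- v = b
            have : a = w := huniq a (M.adj_symm h)
            exact hne' (by rw [this, Sym2.eq_swap])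
    have hmem : s(v, w) ∈ M.edgeSet := hvw
    have hle : matchingNumber G - 1 ≤ matchingNumber (cut G u v) := by
      have := le_matchingNumber (cutSub_isMatching hM (u := u) (v := v))
      rwa [hkey, Set.ncard_diff_singleton_of_mem hmem, hMcard] at this
    omega
  · -- v is not covered: contradiction with maximality
    have hu : ¬ ∃ w, M.Adj u w := by
      rintro ⟨w, hw⟩
      exact hv ⟨u, M.adj_symm (hleaf w (M.adj_sub hw) ▸ hw)⟩
    have hdisj2 : Disjoint M.support (G.subgraphOfAdj hadj).support := by
      rw [support_subgraphOfAdj, Set.disjoint_right]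
      rintro a (rfl | rfl) ha
      · exact hu ha
      · exact hv ha
    have hbig : (M ⊔ G.subgraphOfAdj hadj).IsMatching :=
      hM.sup (Subgraph.IsMatching.subgraphOfAdj hadj) hdisj2
    have hnm : s(u, v) ∉ M.edgeSet := fun h => hu ⟨v, h⟩
    have : matchingNumber G + 1 ≤ matchingNumber G := by
      have := le_matchingNumber hbig
      rwa [Subgraph.edgeSet_sup, edgeSet_subgraphOfAdj, Set.union_singleton,
        Set.ncard_insert_of_notMem hnm (Set.toFinite _), hMcard] at this
    omega

lemma exists_leaf {G : SimpleGraph V} (hG : G.IsAcyclic) (he : G.edgeSet.Nonempty) :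
    ∃ u v, G.Adj u v ∧ ∀ w, G.Adj u w → w = v := by
  classical
  obtain ⟨e, he⟩ := he
  induction e with
  | _ x y =>
  rw [mem_edgeSet] at he
  set S : Set ℕ := {n | ∃ (a : V) (b : V) (p : G.Walk a b), p.IsPath ∧ p.length = n} with hS
  have h1 : 1 ∈ S := ⟨x, y, Walk.cons he Walk.nil, by simp [Walk.cons_isPath_iff, he.ne], rfl⟩
  have hbdd : BddAbove S := by
    refine ⟨Fintype.card V, ?_⟩
    rintro n ⟨a, b, p, hp, rfl⟩
    exact hp.length_lt.le
  obtain ⟨a, b, p, hp, hlen⟩ : sSup S ∈ S := Nat.sSup_mem ⟨1, h1⟩ hbdd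
  have hn1 : 1 ≤ sSup S := le_csSup hbdd h1
  cases p with
  | nil => rw [Walk.length_nil] at hlen; omega
  | @cons _ c _ hac q =>
    refine ⟨a, c, hac, ?_⟩
    intro w hw
    by_contra hwc
    have hwa : w ≠ a := hw.ne'
    rw [Walk.cons_isPath_iff] at hp
    by_cases hws : w ∈ (Walk.cons hac q).support
    · -- closed walk: a cycle, contradiction
      set r := (Walk.cons hac q).takeUntil w hws with hr
      have hrp : r.IsPath := (Walk.cons_isPath_iff hac q).mpr hp |>.takeUntil hws
      have hedge : s(w, a) ∉ r.edges := by
        intro hmem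
        have := Walk.edges_takeUntil_subset (Walk.cons hac q) hws hmem
        rw [Walk.edges_cons, List.mem_cons] at this
        rcases this with h' | h'
        · rw [Sym2.eq_iff] at h'
          rcases h' with ⟨h1', -⟩ | ⟨h1', -⟩
          · exact hwa h1'
          · exact hwc h1'
        · exact hp.2 (Walk.snd_mem_support_of_mem_edges q h')
      have hcyc : (Walk.cons hw.symm r).IsCycle := by
        rw [Walk.cons_isCycle_iff]
        exact ⟨hrp, hedge⟩
      exact hG _ hcyc
    · -- extend the path: contradiction with maximality
      have hp' : (Walk.cons hw.symm (Walk.cons hac q)).IsPath := by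
        rw [Walk.cons_isPath_iff]
        exact ⟨(Walk.cons_isPath_iff hac q).mpr hp, hws⟩
      have : sSup S + 1 ∈ S := ⟨w, b, _, hp', by simp [hlen]⟩
      have := le_csSup hbdd this
      omega


lemma main_induction : ∀ (n : ℕ) (G : SimpleGraph V) [DecidableRel G.Adj],
    G.edgeSet.ncard = n → G.IsAcyclic →
    (G.adjMatrix ℝ).rank = 2 * matchingNumber G := by
  intro n
  induction n using Nat.strong_induction_on with
  | _ n ih =>
    intro G _ hcard hac
    by_cases hne : G.edgeSet.Nonempty
    · obtain ⟨u, v, hadj, hleaf⟩ := exists_leaf hac hne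
      have hlt : (cut G u v).edgeSet.ncard < n := by
        rw [← hcard]
        exact Set.ncard_lt_ncard (cut_edgeSet_ssubset hadj) (Set.toFinite _)
      have hih := ih _ hlt (cut G u v) rfl (cut_isAcyclic hac u v)
      rw [rank_cut hadj hleaf, matchingNumber_cut hadj hleaf, hih]
      ring
    · rw [Set.not_nonempty_iff_eq_empty] at hne
      have hAdj : ∀ a b : V, ¬ G.Adj a b := by
        intro a b h
        have : s(a, b) ∈ G.edgeSet := h
        rw [hne] at this
        exact this
      have hzero : (G.adjMatrix ℝ) = 0 := by
        ext a b
        simp [adjMatrix_apply, hAdj a b]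
      have hm : matchingNumber G = 0 := by
        refine le_antisymm ?_ (Nat.zero_le _)
        apply csSup_le (mset_nonempty G)
        rintro k ⟨M, -, rfl⟩
        have : M.edgeSet = ∅ := by
          apply Set.eq_empty_of_subset_empty
          rw [← hne]
          exact M.edgeSet_subset
        simp [this]
      rw [hzero, Matrix.rank_zero, hm]

end TreeRankAux

/-- For a tree, the rank of the adjacency matrix over the reals equals
twice the matching number. -/
theorem tree_rank_eq_two_mul_matchingNumber {V : Type*} [Fintype V] [DecidableEq V]
    (G : SimpleGraph V) [DecidableRel G.Adj] (hT : G.IsTree) :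
    (G.adjMatrix ℝ).rank = 2 * matchingNumber G :=
  TreeRankAux.main_induction _ G rfl hT.IsAcyclic
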